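/- Let (b₁, …, b_T) be an arbitrary finite dialogue (b_t ∈ [0,1] for all t) that does not violate certainty acquiescence. Then (b₁, …, b_T) is a rational dialogue: there exists a Bayesian opinion framework (Ω, π, A, P, Q) with first speaker p and a state ω* ∈ Ω such that the Bayesian dialogue at the fixed state ω* produces the opinions (r₁, r₂, …) with r_t = b_t for t = 1, …, T. Moreover, consensus is reached at time T at the value b_T, i.e., r_t = b_T for all t ≥ T. -/

import Mathlib

/- Formalization of "Rational Dialogues" (Geanakoplos–Polemarchakis).

A Bayesian opinion framework on a finite type `Ω` consists of a strictly
positive probability `π` on `Ω`, an event `A : Finset Ω`, and two partitions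
given by their cell maps `P Q : Ω → Finset Ω`.  The agents speak alternately;
the listener refines her partition by the speaker's announced opinion
function.  `dialogue π A P Q pFirst ω₀ t` is the opinion announced at
(0-indexed) time `t` at the fixed state `ω₀`, where `pFirst = true` means
agent `p` (whose partition is `P`) speaks first. -/

namespace RationalDialogues

variable {Ω : Type}

/-- The measure of a finite set of states. -/
noncomputable def mass [Fintype Ω] (π : Ω → ℝ) (s : Finset Ω) : ℝ :=
  ∑ ω ∈ s, π ω

/-- `C` is the cell map of a partition of `Ω`: every point lies in its own
cell, and any point of a cell has that same cell. -/
def IsPartition [Fintype Ω] (C : Ω → Finset Ω) : Prop :=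
  (∀ ω, ω ∈ C ω) ∧ ∀ ω ω', ω' ∈ C ω → C ω' = C ω

/-- The Bayesian opinion of the agent with cell map `C` at state `ω`:
the conditional probability of `A` given the cell `C ω`. -/
noncomputable def opin [Fintype Ω] [DecidableEq Ω] (π : Ω → ℝ) (A : Finset Ω)
    (C : Ω → Finset Ω) (ω : Ω) : ℝ :=
  mass π (C ω ∩ A) / mass π (C ω)

open Classical in
/-- The refinement `D ∨ c_A` of the listener's partition `D` by the speaker's
announced opinion function (the speaker's cell map being `C`):
`[D ∨ c_A](ω) = D(ω) ∩ {ω' : opinion_C(ω') = opinion_C(ω)}`. -/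
noncomputable def refineBy [Fintype Ω] [DecidableEq Ω] (π : Ω → ℝ) (A : Finset Ω)
    (C D : Ω → Finset Ω) : Ω → Finset Ω :=
  fun ω => (D ω).filter (fun ω' => opin π A C ω' = opin π A C ω)

/-- Agent `p` is the speaker at (0-indexed) time `n`. -/
def pSpeaksAt (pFirst : Bool) (n : ℕ) : Prop := (pFirst = true ↔ Even n)

open Classical in
/-- The pair of partitions (cell maps of `p` and `q`) at (0-indexed) time `n`,
starting from `(P, Q)` at time `0`, where at each time the current speaker's
opinion function refines the listener's partition for the next period. -/
noncomputable def partsAt [Fintype Ω] [DecidableEq Ω] (π : Ω → ℝ) (A : Finset Ω)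
    (P Q : Ω → Finset Ω) (pFirst : Bool) : ℕ → (Ω → Finset Ω) × (Ω → Finset Ω)
  | 0 => (P, Q)
  | n + 1 =>
      let C := partsAt π A P Q pFirst n
      if pSpeaksAt pFirst n then (C.1, refineBy π A C.1 C.2)
      else (refineBy π A C.2 C.1, C.2)

open Classical in
/-- The Bayesian dialogue at the fixed state `ω₀`: the opinion announced at
(0-indexed) time `n` by the time-`n` speaker, given his/her current cell. -/
noncomputable def dialogue [Fintype Ω] [DecidableEq Ω] (π : Ω → ℝ) (A : Finset Ω)
    (P Q : Ω → Finset Ω) (pFirst : Bool) (ω₀ : Ω) (n : ℕ) : ℝ :=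
  if pSpeaksAt pFirst n then opin π A (partsAt π A P Q pFirst n).1 ω₀
  else opin π A (partsAt π A P Q pFirst n).2 ω₀

/-- `(π, P, Q)` is a Bayesian opinion framework: `π` is a strictly positive
probability on the finite type `Ω` and `P`, `Q` are partitions. -/
def IsBOF [Fintype Ω] (π : Ω → ℝ) (P Q : Ω → Finset Ω) : Prop :=
  (∀ ω, 0 < π ω) ∧ (∑ ω, π ω = 1) ∧ IsPartition P ∧ IsPartition Q

end RationalDialogues

open RationalDialogues

set_option linter.unusedSectionVars false

namespace RD
open RationalDialogues

variable {Ω : Type} [Fintype Ω] [DecidableEq Ω]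

lemma mass_nonneg {π : Ω → ℝ} (hπ : ∀ ω, 0 ≤ π ω) (s : Finset Ω) : 0 ≤ mass π s :=
  Finset.sum_nonneg fun i _ => hπ i

lemma mass_pos {π : Ω → ℝ} (hπ : ∀ ω, 0 < π ω) {s : Finset Ω} (hs : s.Nonempty) :
    0 < mass π s :=
  Finset.sum_pos (fun i _ => hπ i) hs

lemma pSpeaksAt_true (n : ℕ) : pSpeaksAt true n ↔ Even n := by simp [pSpeaksAt]

lemma pSpeaks0 : pSpeaksAt true 0 := by simp [pSpeaksAt]

lemma notpSpeaks1 : ¬ pSpeaksAt true 1 := by simp [pSpeaksAt]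

lemma pSpeaksAt_false (n : ℕ) : pSpeaksAt false n ↔ ¬ Even n := by simp [pSpeaksAt]

lemma partsAt_succ_p {π : Ω → ℝ} {A : Finset Ω} {P Q : Ω → Finset Ω} {bb : Bool} {n : ℕ}
    (h : pSpeaksAt bb n) :
    partsAt π A P Q bb (n+1) =
      ((partsAt π A P Q bb n).1,
        refineBy π A (partsAt π A P Q bb n).1 (partsAt π A P Q bb n).2) := by
  rw [partsAt]; exact if_pos h

lemma partsAt_succ_q {π : Ω → ℝ} {A : Finset Ω} {P Q : Ω → Finset Ω} {bb : Bool} {n : ℕ}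
    (h : ¬ pSpeaksAt bb n) :
    partsAt π A P Q bb (n+1) =
      (refineBy π A (partsAt π A P Q bb n).2 (partsAt π A P Q bb n).1,
        (partsAt π A P Q bb n).2) := by
  rw [partsAt]; exact if_neg h

lemma opin_const_refine {π : Ω → ℝ} {A : Finset Ω} {C D : Ω → Finset Ω}
    (h : ∀ x, ∀ y ∈ D x, opin π A C y = opin π A C x) : refineBy π A C D = D := by
  funext x
  exact Finset.filter_true_of_mem (fun y hy => h x y hy)

lemma opin_singleton {π : Ω → ℝ} {A : Finset Ω} {C : Ω → Finset Ω} {x : Ω}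
    (hC : C x = {x}) (hπ : π x ≠ 0) :
    opin π A C x = if x ∈ A then 1 else 0 := by
  rw [opin, hC]
  by_cases hx : x ∈ A
  · simp [hx, mass, Finset.singleton_inter_of_mem hx, div_self hπ]
  · simp [hx, mass, Finset.singleton_inter_of_notMem hx]

end RD
namespace RD
open RationalDialogues

variable {Ω : Type} [Fintype Ω] [DecidableEq Ω]

lemma pSpeaksAt_succ_iff (bb : Bool) (n : ℕ) :
    pSpeaksAt bb (n+1) ↔ pSpeaksAt (!bb) n := by
  cases bb <;> simp [pSpeaksAt, Nat.even_add_one]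

lemma partsAt_swap (π : Ω → ℝ) (A : Finset Ω) (P Q : Ω → Finset Ω) (n : ℕ) :
    partsAt π A Q P false n = ((partsAt π A P Q true n).2, (partsAt π A P Q true n).1) := by
  induction n with
  | zero => rfl
  | succ k ih =>
      by_cases h : Even k
      · rw [partsAt_succ_q (by simp [pSpeaksAt_false, h]),
          partsAt_succ_p (by simp [pSpeaksAt_true, h]), ih]
      · rw [partsAt_succ_p (by simp [pSpeaksAt_false, h]),
          partsAt_succ_q (by simp [pSpeaksAt_true, h]), ih]

lemma partsAt_shift1 (π : Ω → ℝ) (A : Finset Ω) (P Q : Ω → Finset Ω) (bb : Bool) (k : ℕ) :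
    partsAt π A P Q bb (k+1) =
      partsAt π A (partsAt π A P Q bb 1).1 (partsAt π A P Q bb 1).2 (!bb) k := by
  induction k with
  | zero => rfl
  | succ k ih =>
      by_cases h : pSpeaksAt (!bb) k
      · rw [partsAt_succ_p ((pSpeaksAt_succ_iff bb k).2 h), ih, partsAt_succ_p h]
      · rw [partsAt_succ_q (fun hc => h ((pSpeaksAt_succ_iff bb k).1 hc)), ih,
          partsAt_succ_q h]

lemma partsAt_shift2 (π : Ω → ℝ) (A : Finset Ω) (P Q : Ω → Finset Ω) (bb : Bool) (k : ℕ) :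
    partsAt π A P Q bb (k+2) =
      partsAt π A (partsAt π A P Q bb 2).1 (partsAt π A P Q bb 2).2 bb k := by
  have h1 := partsAt_shift1 π A P Q bb (k+1)
  rw [h1, partsAt_shift1, Bool.not_not]
  have e1 : partsAt π A (partsAt π A P Q bb 1).1 (partsAt π A P Q bb 1).2 (!bb) 1
      = partsAt π A P Q bb 2 := (partsAt_shift1 π A P Q bb 1).symm
  rw [e1]

/-- scaling -/
lemma mass_smul (c : ℝ) (π : Ω → ℝ) (s : Finset Ω) :
    mass (fun w => c * π w) s = c * mass π s := by
  simp [mass, Finset.mul_sum]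

lemma opin_smul {c : ℝ} (hc : c ≠ 0) (π : Ω → ℝ) (A : Finset Ω) (C : Ω → Finset Ω) (x : Ω) :
    opin (fun w => c * π w) A C x = opin π A C x := by
  rw [opin, opin, mass_smul, mass_smul, mul_div_mul_left _ _ hc]

lemma refineBy_smul {c : ℝ} (hc : c ≠ 0) (π : Ω → ℝ) (A : Finset Ω) (C D : Ω → Finset Ω) :
    refineBy (fun w => c * π w) A C D = refineBy π A C D := by
  funext x
  rw [refineBy, refineBy]
  apply Finset.filter_congr
  intro y _
  simp [opin_smul hc]

lemma partsAt_smul {c : ℝ} (hc : c ≠ 0) (π : Ω → ℝ) (A : Finset Ω) (P Q : Ω → Finset Ω)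
    (bb : Bool) (n : ℕ) :
    partsAt (fun w => c * π w) A P Q bb n = partsAt π A P Q bb n := by
  induction n with
  | zero => rfl
  | succ k ih =>
      by_cases h : pSpeaksAt bb k
      · rw [partsAt_succ_p h, partsAt_succ_p h, ih, refineBy_smul hc]
      · rw [partsAt_succ_q h, partsAt_succ_q h, ih, refineBy_smul hc]

lemma dialogue_smul {c : ℝ} (hc : c ≠ 0) (π : Ω → ℝ) (A : Finset Ω) (P Q : Ω → Finset Ω)
    (bb : Bool) (ω₀ : Ω) (n : ℕ) :
    dialogue (fun w => c * π w) A P Q bb ω₀ n = dialogue π A P Q bb ω₀ n := by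
  rw [dialogue, dialogue, partsAt_smul hc]
  by_cases h : pSpeaksAt bb n <;> simp [h, opin_smul hc]

end RD
namespace RD
open RationalDialogues

section Lift

variable {Γ : Type} [Fintype Γ] [DecidableEq Γ]

/-- embedding of states -/
def inlEmb (Γ : Type) : Γ ↪ Γ ⊕ (Γ × Bool) := ⟨Sum.inl, Sum.inl_injective⟩

noncomputable def liftSet (s : Finset Γ) : Finset (Γ ⊕ (Γ × Bool)) := s.map (inlEmb Γ)

@[simp] lemma mem_liftSet_inl {s : Finset Γ} {z : Γ} :
    Sum.inl z ∈ liftSet s ↔ z ∈ s := by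
  simp [liftSet, inlEmb]

@[simp] lemma mem_liftSet_inr {s : Finset Γ} {w : Γ × Bool} :
    Sum.inr w ∉ liftSet s := by
  simp [liftSet, inlEmb]

lemma liftSet_eq_singleton_iff {s : Finset Γ} {y : Γ} :
    liftSet s = {Sum.inl y} ↔ s = {y} := by
  constructor
  · intro h
    ext z
    constructor
    · intro hz
      have : Sum.inl z ∈ liftSet s := by simpa using hz
      rw [h] at this
      simpa using this
    · intro hz
      simp only [Finset.mem_singleton] at hz
      subst hz
      have : Sum.inl z ∈ ({Sum.inl z} : Finset (Γ ⊕ (Γ × Bool))) := by simp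
      rw [← h] at this
      simpa using this
  · intro h; subst h; rfl

noncomputable def liftMap (D : Γ → Finset Γ) : (Γ ⊕ (Γ × Bool)) → Finset (Γ ⊕ (Γ × Bool))
  | Sum.inl y => liftSet (D y)
  | Sum.inr w => {Sum.inr w}

@[simp] lemma liftMap_inl (D : Γ → Finset Γ) (y : Γ) :
    liftMap D (Sum.inl y) = liftSet (D y) := rfl

@[simp] lemma liftMap_inr (D : Γ → Finset Γ) (w : Γ × Bool) :
    liftMap D (Sum.inr w) = {Sum.inr w} := rfl

variable (π' : Γ → ℝ) (e : Γ × Bool → ℝ) (A' : Finset Γ) (A'' : Finset (Γ ⊕ (Γ × Bool)))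

lemma mass_liftSet (s : Finset Γ) :
    mass (Sum.elim π' e) (liftSet s) = mass π' s := by
  rw [mass, liftSet, Finset.sum_map]
  rfl

lemma liftSet_inter (hA : ∀ y : Γ, Sum.inl y ∈ A'' ↔ y ∈ A') (s : Finset Γ) :
    liftSet s ∩ A'' = liftSet (s ∩ A') := by
  ext u
  rcases u with z | w
  · simp [hA]
  · simp

lemma opin_lift (hA : ∀ y : Γ, Sum.inl y ∈ A'' ↔ y ∈ A') (C : Γ → Finset Γ) (y : Γ) :
    opin (Sum.elim π' e) A'' (liftMap C) (Sum.inl y) = opin π' A' C y := by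
  rw [opin, opin]
  show mass _ (liftSet (C y) ∩ A'') / mass _ (liftSet (C y)) = _
  rw [liftSet_inter (hA := hA), mass_liftSet, mass_liftSet]

lemma refineBy_lift (hA : ∀ y : Γ, Sum.inl y ∈ A'' ↔ y ∈ A') (C D : Γ → Finset Γ) :
    refineBy (Sum.elim π' e) A'' (liftMap C) (liftMap D) = liftMap (refineBy π' A' C D) := by
  funext x
  rcases x with y | w
  · show Finset.filter _ (liftSet (D y)) = liftSet (Finset.filter _ (D y))
    ext u
    rcases u with z | w
    · simp only [Finset.mem_filter, mem_liftSet_inl]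
      rw [opin_lift (hA := hA), opin_lift (hA := hA)]
    · simp
  · show Finset.filter _ {Sum.inr w} = {Sum.inr w}
    apply Finset.filter_true_of_mem
    intro u hu
    simp only [Finset.mem_singleton] at hu
    subst hu
    rfl

lemma partsAt_lift (hA : ∀ y : Γ, Sum.inl y ∈ A'' ↔ y ∈ A') (C D : Γ → Finset Γ)
    (bb : Bool) (k : ℕ) :
    partsAt (Sum.elim π' e) A'' (liftMap C) (liftMap D) bb k =
      (liftMap (partsAt π' A' C D bb k).1, liftMap (partsAt π' A' C D bb k).2) := by
  induction k with
  | zero => rfl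
  | succ k ih =>
      by_cases h : pSpeaksAt bb k
      · rw [partsAt_succ_p h, partsAt_succ_p h, ih]
        simp only
        rw [refineBy_lift (hA := hA)]
      · rw [partsAt_succ_q h, partsAt_succ_q h, ih]
        simp only
        rw [refineBy_lift (hA := hA)]

lemma isPartition_liftMap {D : Γ → Finset Γ} (hD : IsPartition D) :
    IsPartition (liftMap D) := by
  constructor
  · intro x
    rcases x with y | w
    · show Sum.inl y ∈ liftSet (D y); simp [hD.1 y]
    · show _ ∈ ({Sum.inr w} : Finset _); simp
  · intro x x' hx'
    rcases x with y | w
    · rcases x' with z | w'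
      · show liftMap D (Sum.inl z) = _
        have : z ∈ D y := by simpa [liftMap] using hx'
        show liftSet (D z) = liftSet (D y)
        rw [hD.2 y z this]
      · exact absurd hx' (by simp [liftMap])
    · have : x' = Sum.inr w := by simpa [liftMap] using hx'
      rw [this]

end Lift

end RD
namespace RD
open RationalDialogues

section LiftR

variable {Γ : Type} [Fintype Γ] [DecidableEq Γ]
variable (π' : Γ → ℝ) (e : Γ × Bool → ℝ) (A' : Finset Γ) (A'' : Finset (Γ ⊕ (Γ × Bool)))
variable (R : Γ × Bool → Finset (Γ ⊕ (Γ × Bool)))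

/-- lift with prescribed (stable) cells on the new states -/
noncomputable def liftMapR (C : Γ → Finset Γ) : (Γ ⊕ (Γ × Bool)) → Finset (Γ ⊕ (Γ × Bool))
  | Sum.inl y => liftSet (C y)
  | Sum.inr w => R w

@[simp] lemma liftMapR_inl (C : Γ → Finset Γ) (y : Γ) :
    liftMapR R C (Sum.inl y) = liftSet (C y) := rfl

@[simp] lemma liftMapR_inr (C : Γ → Finset Γ) (w : Γ × Bool) :
    liftMapR R C (Sum.inr w) = R w := rfl

lemma opin_liftR (hA : ∀ y : Γ, Sum.inl y ∈ A'' ↔ y ∈ A') (C : Γ → Finset Γ) (y : Γ) :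
    opin (Sum.elim π' e) A'' (liftMapR R C) (Sum.inl y) = opin π' A' C y := by
  rw [opin, opin]
  show mass _ (liftSet (C y) ∩ A'') / mass _ (liftSet (C y)) = _
  rw [liftSet_inter (hA := hA), mass_liftSet, mass_liftSet]

lemma opin_singleton_ind {π : (Γ ⊕ (Γ × Bool)) → ℝ} {B : Finset (Γ ⊕ (Γ × Bool))}
    {C : (Γ ⊕ (Γ × Bool)) → Finset (Γ ⊕ (Γ × Bool))} {u : Γ ⊕ (Γ × Bool)}
    (hC : C u = {u}) (hπ : π u ≠ 0) :
    opin π B C u = if u ∈ B then 1 else 0 := opin_singleton hC hπ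

variable (hpos : ∀ u : Γ ⊕ (Γ × Bool), 0 < Sum.elim π' e u)
variable (hA : ∀ y : Γ, Sum.inl y ∈ A'' ↔ y ∈ A')
variable (hR : ∀ w, ∀ u ∈ R w, (∃ w', u = Sum.inr w') ∧ (u ∈ A'' ↔ Sum.inr w ∈ A''))

include hpos hA hR in
lemma refineBy_liftQP (C D : Γ → Finset Γ) :
    refineBy (Sum.elim π' e) A'' (liftMap D) (liftMapR R C) =
      liftMapR R (refineBy π' A' D C) := by
  funext x
  rcases x with y | w
  · show Finset.filter _ (liftSet (C y)) = liftSet (Finset.filter _ (C y))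
    ext u
    rcases u with z | w
    · simp only [Finset.mem_filter, mem_liftSet_inl]
      rw [opin_lift (hA := hA), opin_lift (hA := hA)]
    · simp
  · show Finset.filter _ (R w) = R w
    apply Finset.filter_true_of_mem
    intro u hu
    obtain ⟨⟨w', rfl⟩, hAiff⟩ := hR w u hu
    rw [opin_singleton_ind (by simp) (ne_of_gt (hpos _)),
        opin_singleton_ind (by simp) (ne_of_gt (hpos _))]
    by_cases h : Sum.inr w ∈ A''
    · simp [h, hAiff.2 h]
    · have h2 : Sum.inr w' ∉ A'' := fun hh => h (hAiff.1 hh)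
      simp [h, h2]

include hA in
lemma refineBy_liftPQ (C D : Γ → Finset Γ) :
    refineBy (Sum.elim π' e) A'' (liftMapR R C) (liftMap D) =
      liftMap (refineBy π' A' C D) := by
  funext x
  rcases x with y | w
  · show Finset.filter _ (liftSet (D y)) = liftSet (Finset.filter _ (D y))
    ext u
    rcases u with z | w
    · simp only [Finset.mem_filter, mem_liftSet_inl]
      rw [opin_liftR (hA := hA), opin_liftR (hA := hA)]
    · simp
  · show Finset.filter _ {Sum.inr w} = {Sum.inr w}
    apply Finset.filter_true_of_mem
    intro u hu
    simp only [Finset.mem_singleton] at hu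
    subst hu
    rfl

include hpos hA hR in
lemma partsAt_liftR (C D : Γ → Finset Γ) (k : ℕ) :
    partsAt (Sum.elim π' e) A'' (liftMapR R C) (liftMap D) true k =
      (liftMapR R (partsAt π' A' C D true k).1, liftMap (partsAt π' A' C D true k).2) := by
  induction k with
  | zero => rfl
  | succ k ih =>
      by_cases h : pSpeaksAt true k
      · rw [partsAt_succ_p h, partsAt_succ_p h, ih]
        simp only
        rw [refineBy_liftPQ (hA := hA)]
      · rw [partsAt_succ_q h, partsAt_succ_q h, ih]
        simp only
        rw [refineBy_liftQP (hpos := hpos) (hA := hA) (hR := hR)]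

end LiftR

end RD
namespace RD
open RationalDialogues

variable {Ω : Type} [Fintype Ω] [DecidableEq Ω]

lemma partsAt_fixed {π : Ω → ℝ} {A : Finset Ω} {P Q : Ω → Finset Ω} {bb : Bool}
    (h1 : refineBy π A P Q = Q) (h2 : refineBy π A Q P = P) (n : ℕ) :
    partsAt π A P Q bb n = (P, Q) := by
  induction n with
  | zero => rfl
  | succ k ih =>
      by_cases h : pSpeaksAt bb k
      · rw [partsAt_succ_p h, ih]; simp [h1]
      · rw [partsAt_succ_q h, ih]; simp [h2]

lemma dialogue_of_fixed {π : Ω → ℝ} {A : Finset Ω} {P Q : Ω → Finset Ω} {ω₀ : Ω}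
    (h1 : refineBy π A P Q = Q) (h2 : refineBy π A Q P = P)
    {r : ℝ} (hP : opin π A P ω₀ = r) (hQ : opin π A Q ω₀ = r) (n : ℕ) :
    dialogue π A P Q true ω₀ n = r := by
  rw [dialogue, partsAt_fixed h1 h2]
  by_cases h : pSpeaksAt true n <;> simp [h, hP, hQ]

/-- the inductive statement -/
def Realizes (T : ℕ) (b : ℕ → ℝ) : Prop :=
  ∃ (Ω : Type) (_ : Fintype Ω) (_ : DecidableEq Ω) (π : Ω → ℝ) (A : Finset Ω)
    (P Q : Ω → Finset Ω) (ω₀ : Ω),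
    (∀ ω, 0 < π ω) ∧ IsPartition P ∧ IsPartition Q ∧
    (∀ n, dialogue π A P Q true ω₀ n = b (min n (T-1))) ∧
    (∀ y, opin π A P y = b 0 ∨ P y = {y}) ∧
    (∀ y, Q y ≠ {y} → opin π A P y = b 0) ∧
    (∀ y, Q y ≠ {y} → P y ≠ {y})

section Bases

variable {T : ℕ} {b : ℕ → ℝ}

lemma b_const (hca : ∀ t, t + 1 < T → (b t = 0 ∨ b t = 1) → b (t + 1) = b t)
    (hc : b 0 = 0 ∨ b 0 = 1) : ∀ t, t < T → b t = b 0 := by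
  intro t
  induction t with
  | zero => intro _; rfl
  | succ k ih =>
      intro hk
      have hbk : b k = b 0 := ih (by omega)
      rw [hca k (by omega) (by rw [hbk]; exact hc), hbk]

/-- Base: constant 0/1 dialogue. -/
lemma base_const (hT : 1 ≤ T)
    (hca : ∀ t, t + 1 < T → (b t = 0 ∨ b t = 1) → b (t + 1) = b t)
    (hc : b 0 = 0 ∨ b 0 = 1) : Realizes T b := by
  classical
  refine ⟨PUnit, inferInstance, inferInstance, (fun _ => 1),
    (if b 0 = 1 then Finset.univ else ∅), (fun _ => Finset.univ), (fun _ => Finset.univ),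
    PUnit.unit, fun _ => one_pos, ⟨fun _ => Finset.mem_univ _, fun _ _ _ => rfl⟩,
    ⟨fun _ => Finset.mem_univ _, fun _ _ _ => rfl⟩, ?_, ?_, ?_, ?_⟩
  · have hop : ∀ x : PUnit, opin (fun _ => (1:ℝ)) (if b 0 = 1 then Finset.univ else ∅)
        (fun _ => Finset.univ) x = b 0 := by
      intro x
      rcases hc with h0 | h1
      · rw [h0]; simp [opin, mass, h0]
      · rw [h1]; simp [opin, mass, h1]
    intro n
    rw [b_const hca hc (min n (T-1)) (by omega)]
    exact dialogue_of_fixed (opin_const_refine (fun x y _ => (hop y).trans (hop x).symm))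
      (opin_const_refine (fun x y _ => (hop y).trans (hop x).symm)) (hop _) (hop _) n
  · intro y
    left
    rcases hc with h0 | h1
    · rw [h0]; simp [opin, mass, h0]
    · rw [h1]; simp [opin, mass, h1]
  · intro y _
    rcases hc with h0 | h1
    · rw [h0]; simp [opin, mass, h0]
    · rw [h1]; simp [opin, mass, h1]
  · intro y h
    exact h

/-- Base: T = 1, interior first value. -/
lemma base_one (hT : T = 1) (h0 : 0 < b 0) (h1 : b 0 < 1) : Realizes T b := by
  classical
  have hop : ∀ x : Bool, opin (fun z => if z then b 0 else 1 - b 0) {true}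
      (fun _ => Finset.univ) x = b 0 := by
    intro x
    rw [opin, Finset.univ_inter]
    have hm : mass (fun z : Bool => if z then b 0 else 1 - b 0) Finset.univ = 1 := by
      simp [mass, Fintype.sum_bool]
    have hs : mass (fun z : Bool => if z then b 0 else 1 - b 0) {true} = b 0 := by
      simp [mass]
    rw [hm, hs, div_one]
  refine ⟨Bool, inferInstance, inferInstance, (fun z => if z then b 0 else 1 - b 0),
    {true}, (fun _ => Finset.univ), (fun _ => Finset.univ), false,
    ?_, ⟨fun _ => Finset.mem_univ _, fun _ _ _ => rfl⟩,
    ⟨fun _ => Finset.mem_univ _, fun _ _ _ => rfl⟩, ?_, ?_, ?_, ?_⟩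
  · intro z
    cases z
    · simpa using (by linarith : (0:ℝ) < 1 - b 0)
    · simpa using h0
  · intro n
    rw [hT]
    simp only [Nat.sub_self, Nat.min_zero]
    exact dialogue_of_fixed (opin_const_refine (fun x y _ => (hop y).trans (hop x).symm))
      (opin_const_refine (fun x y _ => (hop y).trans (hop x).symm)) (hop _) (hop _) n
  · intro y; left; exact hop y
  · intro y _; exact hop y
  · intro y _
    intro hEq
    have h2 : (!y) ∈ (fun _ => (Finset.univ : Finset Bool)) y := Finset.mem_univ _
    rw [hEq] at h2
    simp at h2

end Bases

end RD
namespace RD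
open RationalDialogues

variable {T : ℕ} {b : ℕ → ℝ}

lemma opin_congr {Ω : Type} [Fintype Ω] [DecidableEq Ω] {π : Ω → ℝ} {A : Finset Ω}
    {C : Ω → Finset Ω} {x y : Ω} (h : C y = C x) : opin π A C y = opin π A C x := by
  rw [opin, opin, h]

lemma b_tail_const (hca : ∀ t, t + 1 < T → (b t = 0 ∨ b t = 1) → b (t + 1) = b t)
    (hc : b 1 = 0 ∨ b 1 = 1) : ∀ t, 1 ≤ t → t < T → b t = b 1 := by
  intro t
  induction t with
  | zero => omega
  | succ k ih =>
      intro _ hk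
      rcases Nat.lt_or_ge k 1 with h | h
      · interval_cases k
        · rfl
      · have hbk : b k = b 1 := ih h (by omega)
        rw [hca k (by omega) (by rw [hbk]; exact hc), hbk]

/-- Base: interior first value, then constant 0/1. -/
lemma base_two (hT : 2 ≤ T) (h0 : 0 < b 0) (h1 : b 0 < 1)
    (hca : ∀ t, t + 1 < T → (b t = 0 ∨ b t = 1) → b (t + 1) = b t)
    (hc : b 1 = 0 ∨ b 1 = 1) : Realizes T b := by
  classical
  set p : ℝ := if b 1 = 1 then b 0 / 2 else (1 - b 0) / 2 with hp'
  set q : ℝ := if b 1 = 1 then 1 - b 0 else b 0 with hq'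
  have hp : 0 < p := by
    rcases hc with h | h <;> simp [hp', h] <;> linarith
  have hq : 0 < q := by
    rcases hc with h | h <;> simp [hq', h] <;> linarith
  set πb : Fin 3 → ℝ := fun x => if x = 2 then q else p with hπb
  set A : Finset (Fin 3) := if b 1 = 1 then {0,1} else {2} with hA
  set P0 : Fin 3 → Finset (Fin 3) := fun _ => Finset.univ with hP0
  set Q0 : Fin 3 → Finset (Fin 3) := fun x => if x = 2 then {2} else {0,1} with hQ0
  have hπpos : ∀ x, 0 < πb x := by
    intro x; rw [hπb]; dsimp only
    split <;> assumption
  have hmU : mass πb Finset.univ = 1 := by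
    rw [mass, Fin.sum_univ_three, hπb]
    rcases hc with h | h <;> (simp [hp', hq', h]; try ring)
  have hmA : mass πb A = b 0 := by
    rcases hc with h | h
    · have e : A = {2} := by rw [hA]; simp [h]
      rw [e, mass, Finset.sum_singleton, hπb]
      simp [hq', h]
    · have e : A = {0,1} := by rw [hA]; simp [h]
      rw [e, mass]
      rw [Finset.sum_pair (by decide)]
      rw [hπb]; simp [hp', h]; try ring
  have hopP : ∀ x, opin πb A P0 x = b 0 := by
    intro x
    rw [opin, hP0]
    dsimp only
    rw [Finset.univ_inter, hmA, hmU, div_one]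
  have hm01 : mass πb ({0,1} : Finset (Fin 3)) = p + p := by
    rw [mass, Finset.sum_pair (by decide), hπb]
    show (if (0:Fin 3) = 2 then q else p) + (if (1:Fin 3) = 2 then q else p) = p + p
    rw [if_neg (by decide), if_neg (by decide)]
  have hopQ : ∀ x : Fin 3, x ≠ 2 → opin πb A Q0 x = b 1 := by
    intro x hx
    have hcell : Q0 x = {0,1} := by rw [hQ0]; simp [hx]
    rw [opin, hcell]
    rcases hc with h | h
    · have e : ({0,1} : Finset (Fin 3)) ∩ A = ∅ := by rw [hA]; simp [h]; try decide
      rw [e, h]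
      simp [mass]
    · have e : ({0,1} : Finset (Fin 3)) ∩ A = {0,1} := by rw [hA]; simp [h]
      rw [e, hm01, h, div_self (by linarith)]
  have hopQ2 : opin πb A Q0 2 = 1 - b 1 := by
    have hcell : Q0 2 = {2} := by rw [hQ0]; simp
    rw [opin, hcell]
    rcases hc with h | h
    · have e : ({2} : Finset (Fin 3)) ∩ A = {2} := by rw [hA]; simp [h]
      rw [e, div_self (by simp [mass]; exact ne_of_gt (hπpos 2)), h]
      norm_num
    · have e : ({2} : Finset (Fin 3)) ∩ A = ∅ := by rw [hA]; simp [h]; try decide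
      rw [e, h]
      simp [mass]
  have hne : b 1 ≠ 1 - b 1 := by
    rcases hc with h | h <;> rw [h] <;> norm_num
  have hQpart : IsPartition Q0 := by
    constructor
    · intro x
      rw [hQ0]; dsimp only
      split
      · simp [*]
      · have : x = 0 ∨ x = 1 := by omega
        rcases this with h | h <;> simp [h]
    · intro x y hy
      rw [hQ0] at hy ⊢
      dsimp only at hy ⊢
      by_cases hx : x = 2
      · simp [hx] at hy; simp [hy, hx]
      · simp [hx] at hy
        have : y ≠ 2 := by
          rcases hy with h | h <;> simp [h]
        simp [this, hx]
  have hsame : ∀ x y, y ∈ Q0 x → opin πb A Q0 y = opin πb A Q0 x :=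
    fun x y hy => opin_congr (hQpart.2 x y hy)
  have hP2 : refineBy πb A Q0 P0 = Q0 := by
    funext x
    rw [refineBy]
    ext y
    rw [Finset.mem_filter]
    by_cases hx : x = 2
    · by_cases hy : y = 2
      · subst hx; subst hy; simp [hQ0, hP0]
      · subst hx
        rw [hopQ y hy, hopQ2]
        simp [hQ0, hP0, hy, hne]
    · by_cases hy : y = 2
      · subst hy
        rw [hopQ x hx, hopQ2]
        have : (2 : Fin 3) ∉ Q0 x := by simp [hQ0, hx]; try decide
        simp [hP0, this]
        intro h; exact hne h.symm
      · rw [hopQ y hy, hopQ x hx]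
        simp [hQ0, hP0, hx, hy]
        have : y = 0 ∨ y = 1 := by omega
        rcases this with h | h <;> simp [h]
  have hQfix : refineBy πb A Q0 Q0 = Q0 := opin_const_refine hsame
  have hPart1 : partsAt πb A P0 Q0 true 1 = (P0, Q0) := by
    rw [partsAt_succ_p pSpeaks0]
    show (P0, refineBy πb A P0 Q0) = (P0, Q0)
    rw [opin_const_refine (fun x y _ => (hopP y).trans (hopP x).symm)]
  have hPart2 : partsAt πb A P0 Q0 true 2 = (Q0, Q0) := by
    rw [partsAt_succ_q notpSpeaks1, hPart1]
    show (refineBy πb A Q0 P0, Q0) = (Q0, Q0)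
    rw [hP2]
  have hPartn : ∀ k, partsAt πb A P0 Q0 true (k + 2) = (Q0, Q0) := by
    intro k
    rw [partsAt_shift2, hPart2]
    exact partsAt_fixed hQfix hQfix k
  have htail := b_tail_const hca hc
  refine ⟨Fin 3, inferInstance, inferInstance, πb, A, P0, Q0, 0,
    hπpos, ⟨fun _ => Finset.mem_univ _, fun _ _ _ => rfl⟩, hQpart, ?_, ?_, ?_, ?_⟩
  · intro n
    match n with
    | 0 =>
        rw [dialogue, if_pos pSpeaks0]
        show opin πb A P0 0 = b (min 0 (T-1))
        rw [hopP]; simp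
    | 1 =>
        rw [dialogue, if_neg notpSpeaks1, hPart1]
        show opin πb A Q0 0 = b (min 1 (T-1))
        rw [hopQ 0 (by decide)]
        congr 1
        omega
    | (k+2) =>
        rw [dialogue, hPartn k]
        have hbv : b (min (k+2) (T-1)) = b 1 := htail _ (by omega) (by omega)
        rw [hbv]
        by_cases h : pSpeaksAt true (k+2) <;>
          simp [h, hopQ 0 (by decide)]
  · intro y; left; exact hopP y
  · intro y _; exact hopP y
  · intro y _
    rw [hP0]
    intro hEq
    have := congrArg Finset.card hEq
    simp at this
end RD
namespace RD
open RationalDialogues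

section StepDefs

variable {Γ : Type} [Fintype Γ] [DecidableEq Γ]

def pairTEmb (Γ : Type) : Γ ↪ Γ ⊕ (Γ × Bool) :=
  ⟨fun y => Sum.inr (y, true), by intro a b h; simpa using h⟩

def pairFEmb (Γ : Type) : Γ ↪ Γ ⊕ (Γ × Bool) :=
  ⟨fun y => Sum.inr (y, false), by intro a b h; simpa using h⟩

@[simp] lemma pairTEmb_apply (y : Γ) : pairTEmb Γ y = Sum.inr (y, true) := rfl

@[simp] lemma pairFEmb_apply (y : Γ) : pairFEmb Γ y = Sum.inr (y, false) := rfl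

variable (P' Q' : Γ → Finset Γ) (A' : Finset Γ) (π' : Γ → ℝ) (b0 : ℝ)

/-- "both cells are singletons" (retired states) -/
def bsP (y : Γ) : Prop := Q' y = {y} ∧ P' y = {y}

open Classical in
noncomputable def attF (s : Finset Γ) : Finset (Γ ⊕ (Γ × Bool)) :=
  (s.map (pairTEmb Γ)) ∪ ((s.filter fun z => ¬ bsP P' Q' z).map (pairFEmb Γ))

noncomputable def cellPF (y : Γ) : Finset (Γ ⊕ (Γ × Bool)) :=
  liftSet (Q' y) ∪ attF P' Q' (Q' y)

open Classical in
noncomputable def PFmap : (Γ ⊕ (Γ × Bool)) → Finset (Γ ⊕ (Γ × Bool))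
  | Sum.inl y => cellPF P' Q' y
  | Sum.inr (y, true) => cellPF P' Q' y
  | Sum.inr (y, false) =>
      if bsP P' Q' y then {Sum.inr (y, false)} else cellPF P' Q' y

open Classical in
noncomputable def AS : Finset (Γ ⊕ (Γ × Bool)) :=
  A'.map (inlEmb Γ) ∪
    (Finset.univ.filter fun y => ¬(bsP P' Q' y ∧ y ∈ A')).map (pairTEmb Γ)

open Classical in
noncomputable def κF : ℝ := 2 / (b0 * (1 - b0))

open Classical in
noncomputable def χF (y : Γ) : ℝ := if y ∈ A' then 1 else 0

open Classical in
noncomputable def eTF (y : Γ) : ℝ :=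
  if bsP P' Q' y then
    (if y ∈ A' then π' y * (1 - b0) / b0 else π' y * b0 / (1 - b0))
  else (b0 * (1 + κF b0) - χF A' y) * π' y

open Classical in
noncomputable def eFF (y : Γ) : ℝ :=
  if bsP P' Q' y then 1 else ((1 - b0) * (1 + κF b0) - (1 - χF A' y)) * π' y

noncomputable def πS : (Γ ⊕ (Γ × Bool)) → ℝ :=
  Sum.elim π' (fun w => if w.2 then eTF P' Q' A' π' b0 w.1 else eFF P' Q' A' π' b0 w.1)

open Classical in
noncomputable def RS (w : Γ × Bool) : Finset (Γ ⊕ (Γ × Bool)) :=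
  if bsP P' Q' w.1 ∧ w.2 = false then {Sum.inr w}
  else (attF P' Q' (Q' w.1)).filter
    fun u => (u ∈ AS P' Q' A' ↔ Sum.inr w ∈ AS P' Q' A')

/- membership lemmas -/

@[simp] lemma mem_attF_T {s : Finset Γ} {z : Γ} :
    Sum.inr (z, true) ∈ attF P' Q' s ↔ z ∈ s := by
  simp [attF, pairTEmb_apply, pairFEmb_apply]

@[simp] lemma mem_attF_F {s : Finset Γ} {z : Γ} :
    Sum.inr (z, false) ∈ attF P' Q' s ↔ z ∈ s ∧ ¬ bsP P' Q' z := by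
  simp [attF, pairTEmb_apply, pairFEmb_apply]

@[simp] lemma mem_attF_inl {s : Finset Γ} {z : Γ} :
    Sum.inl z ∉ attF P' Q' s := by
  simp [attF, pairTEmb_apply, pairFEmb_apply]

@[simp] lemma mem_AS_inl {z : Γ} : Sum.inl z ∈ AS P' Q' A' ↔ z ∈ A' := by
  simp [AS, inlEmb, pairTEmb]

@[simp] lemma mem_AS_T {z : Γ} :
    Sum.inr (z, true) ∈ AS P' Q' A' ↔ ¬(bsP P' Q' z ∧ z ∈ A') := by
  simp [AS, inlEmb, pairTEmb_apply]

@[simp] lemma mem_AS_F {z : Γ} : Sum.inr (z, false) ∉ AS P' Q' A' := by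
  simp [AS, inlEmb, pairTEmb_apply, pairFEmb_apply]

@[simp] lemma mem_cellPF_inl {y z : Γ} :
    Sum.inl z ∈ cellPF P' Q' y ↔ z ∈ Q' y := by
  simp [cellPF]

@[simp] lemma mem_cellPF_T {y z : Γ} :
    Sum.inr (z, true) ∈ cellPF P' Q' y ↔ z ∈ Q' y := by
  simp [cellPF]

@[simp] lemma mem_cellPF_F {y z : Γ} :
    Sum.inr (z, false) ∈ cellPF P' Q' y ↔ z ∈ Q' y ∧ ¬ bsP P' Q' z := by
  simp [cellPF]

lemma cellPF_congr {y z : Γ} (h : Q' z = Q' y) : cellPF P' Q' z = cellPF P' Q' y := by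
  rw [cellPF, cellPF, h]

end StepDefs

end RD
namespace RD
open RationalDialogues

section StepMass

variable {Γ : Type} [Fintype Γ] [DecidableEq Γ]
variable {P' Q' : Γ → Finset Γ} {A' : Finset Γ} {π' : Γ → ℝ} {b0 : ℝ}
variable (hb0 : 0 < b0) (hb1 : b0 < 1) (hπ' : ∀ y, 0 < π' y)

include hb0 hb1 in
lemma kappa_T : 1 < b0 * (1 + κF b0) := by
  have hk : κF b0 * (b0 * (1 - b0)) = 2 := by
    rw [κF]
    field_simp
    exact div_self (by linarith)
  nlinarith [hk, sq_nonneg (1 - b0)]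

include hb0 hb1 in
lemma kappa_F : 1 < (1 - b0) * (1 + κF b0) := by
  have hk : κF b0 * (b0 * (1 - b0)) = 2 := by
    rw [κF]
    field_simp
    exact div_self (by linarith)
  nlinarith [hk, sq_nonneg b0]

include hb0 hb1 hπ' in
lemma eTF_pos (y : Γ) : 0 < eTF P' Q' A' π' b0 y := by
  classical
  rw [eTF]
  split
  · split
    · exact div_pos (mul_pos (hπ' y) (by linarith)) hb0
    · exact div_pos (mul_pos (hπ' y) hb0) (by linarith)
  · have h := kappa_T hb0 hb1
    have hχ : χF A' y ≤ 1 := by rw [χF]; split <;> norm_num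
    have := hπ' y
    nlinarith

include hb0 hb1 hπ' in
lemma eFF_pos (y : Γ) : 0 < eFF P' Q' A' π' b0 y := by
  classical
  rw [eFF]
  split
  · norm_num
  · have h := kappa_F hb0 hb1
    have hχ : 0 ≤ χF A' y := by rw [χF]; split <;> norm_num
    have := hπ' y
    nlinarith

include hb0 hb1 hπ' in
lemma πS_pos (u : Γ ⊕ (Γ × Bool)) : 0 < πS P' Q' A' π' b0 u := by
  rcases u with y | ⟨y, t⟩
  · exact hπ' y
  · rcases t with _ | _
    · simpa [πS] using eFF_pos hb0 hb1 hπ' y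
    · simpa [πS] using eTF_pos hb0 hb1 hπ' y

open Classical in
/-- the cell decomposition of mass -/
lemma mass_cellPF (y : Γ) :
    mass (πS P' Q' A' π' b0) (cellPF P' Q' y) =
      ∑ z ∈ Q' y, (π' z + eTF P' Q' A' π' b0 z +
        (if bsP P' Q' z then 0 else eFF P' Q' A' π' b0 z)) := by
  classical
  rw [cellPF, mass, Finset.sum_union (by
    rw [Finset.disjoint_left]
    rintro (z | w) hu hv
    · exact mem_attF_inl P' Q' hv
    · exact mem_liftSet_inr hu)]
  rw [attF, Finset.sum_union (by
    rw [Finset.disjoint_left]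
    rintro (z | ⟨z, t⟩) hu hv
    · simp [pairTEmb] at hu
    · rcases t with _ | _
      · simp [pairTEmb_apply] at hu
      · simp [pairFEmb_apply] at hv)]
  rw [Finset.sum_map, Finset.sum_map, liftSet, Finset.sum_map]
  have e1 : ∀ z ∈ Q' y, πS P' Q' A' π' b0 ((inlEmb Γ) z) = π' z := fun z _ => rfl
  have e2 : ∀ z ∈ Q' y, πS P' Q' A' π' b0 ((pairTEmb Γ) z) = eTF P' Q' A' π' b0 z :=
    fun z _ => rfl
  have e3 : ∀ z ∈ (Q' y).filter (fun z => ¬ bsP P' Q' z),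
      πS P' Q' A' π' b0 ((pairFEmb Γ) z) = eFF P' Q' A' π' b0 z := fun z _ => rfl
  rw [Finset.sum_congr rfl e1, Finset.sum_congr rfl e2, Finset.sum_congr rfl e3]
  rw [Finset.sum_filter]
  rw [← Finset.sum_add_distrib, ← Finset.sum_add_distrib]
  apply Finset.sum_congr rfl
  intro z _
  by_cases h : bsP P' Q' z <;> simp [h] <;> try ring

open Classical in
lemma mass_cellPF_inter (y : Γ) :
    mass (πS P' Q' A' π' b0) (cellPF P' Q' y ∩ AS P' Q' A') =
      ∑ z ∈ Q' y, ((if z ∈ A' then π' z else 0) +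
        (if ¬(bsP P' Q' z ∧ z ∈ A') then eTF P' Q' A' π' b0 z else 0)) := by
  classical
  have hsplit : cellPF P' Q' y ∩ AS P' Q' A' =
      liftSet ((Q' y).filter (· ∈ A')) ∪
        ((Q' y).filter (fun z => ¬(bsP P' Q' z ∧ z ∈ A'))).map (pairTEmb Γ) := by
    ext u
    rcases u with z | ⟨z, t⟩
    · simp [pairTEmb]
    · rcases t with _ | _
      · simp [pairTEmb_apply, pairFEmb_apply]
      · simp [pairTEmb_apply, pairFEmb_apply]
  rw [hsplit, mass, Finset.sum_union (by
    rw [Finset.disjoint_left]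
    rintro (z | w) hu hv
    · simp [pairTEmb] at hv
    · exact mem_liftSet_inr hu)]
  rw [liftSet, Finset.sum_map, Finset.sum_map]
  have e1 : ∀ z ∈ (Q' y).filter (· ∈ A'),
      πS P' Q' A' π' b0 ((inlEmb Γ) z) = π' z := fun z _ => rfl
  have e2 : ∀ z ∈ (Q' y).filter (fun z => ¬(bsP P' Q' z ∧ z ∈ A')),
      πS P' Q' A' π' b0 ((pairTEmb Γ) z) = eTF P' Q' A' π' b0 z := fun z _ => rfl
  rw [Finset.sum_congr rfl e1, Finset.sum_congr rfl e2, Finset.sum_filter, Finset.sum_filter,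
    ← Finset.sum_add_distrib]

open Classical in
include hb0 hb1 hπ' in
lemma key_ratio (z : Γ) :
    (if z ∈ A' then π' z else 0) +
      (if ¬(bsP P' Q' z ∧ z ∈ A') then eTF P' Q' A' π' b0 z else 0) =
    b0 * (π' z + eTF P' Q' A' π' b0 z +
      (if bsP P' Q' z then 0 else eFF P' Q' A' π' b0 z)) := by
  classical
  have hb0' : b0 ≠ 0 := ne_of_gt hb0
  have hb1' : (1 : ℝ) - b0 ≠ 0 := by linarith
  by_cases hbs : bsP P' Q' z <;> by_cases hz : z ∈ A'
  · simp only [eTF, eFF, χF, hbs, hz, if_true, if_pos, and_self, not_true_eq_false,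
      if_false, ite_true]
    simp [hbs, hz]
    field_simp
    ring
  · simp [eTF, eFF, χF, hbs, hz]
    field_simp
    ring
  · simp [eTF, eFF, χF, hbs, hz]
    ring
  · simp [eTF, eFF, χF, hbs, hz]
    ring

open Classical in
include hb0 hb1 hπ' in
lemma mass_cellPF_pos (hmem : ∀ y : Γ, y ∈ Q' y) (y : Γ) :
    0 < mass (πS P' Q' A' π' b0) (cellPF P' Q' y) := by
  classical
  rw [mass_cellPF]
  apply Finset.sum_pos
  · intro z _
    have h1 := hπ' z
    have h2 := eTF_pos hb0 hb1 hπ' (P' := P') (Q' := Q') (A' := A') z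
    have h3 := eFF_pos hb0 hb1 hπ' (P' := P') (Q' := Q') (A' := A') z
    by_cases h : bsP P' Q' z <;> simp [h] <;> linarith
  · exact ⟨y, hmem y⟩

open Classical in
include hb0 hb1 hπ' in
lemma opin_cellPF (hmem : ∀ y : Γ, y ∈ Q' y) {C : (Γ ⊕ (Γ × Bool)) → Finset (Γ ⊕ (Γ × Bool))}
    {x : Γ ⊕ (Γ × Bool)} {y : Γ} (hC : C x = cellPF P' Q' y) :
    opin (πS P' Q' A' π' b0) (AS P' Q' A') C x = b0 := by
  classical
  rw [opin, hC, mass_cellPF_inter, mass_cellPF]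
  rw [Finset.sum_congr rfl (fun z _ => key_ratio hb0 hb1 hπ' z), ← Finset.mul_sum]
  rw [← mass_cellPF, mul_div_assoc,
    div_self (ne_of_gt (mass_cellPF_pos hb0 hb1 hπ' hmem y)), mul_one]

end StepMass

end RD
namespace RD
open RationalDialogues

section StepDyn

variable {Γ : Type} [Fintype Γ] [DecidableEq Γ]
variable {P' Q' : Γ → Finset Γ} {A' : Finset Γ} {π' : Γ → ℝ} {b0 bv1 : ℝ}
variable (hb0 : 0 < b0) (hb1 : b0 < 1) (hπ' : ∀ y, 0 < π' y)
variable (hQP : IsPartition Q') (hPP : IsPartition P')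
variable (hv0 : bv1 ≠ 0) (hv1 : bv1 ≠ 1)
variable (hG3a : ∀ y, opin π' A' P' y = bv1 ∨ P' y = {y})
variable (hG3c : ∀ y, Q' y ≠ {y} → opin π' A' P' y = bv1)

@[simp] lemma PFmap_inl (y : Γ) : PFmap P' Q' (Sum.inl y) = cellPF P' Q' y := rfl

@[simp] lemma PFmap_T (y : Γ) : PFmap P' Q' (Sum.inr (y, true)) = cellPF P' Q' y := rfl

open Classical in
lemma PFmap_F_bs {y : Γ} (h : bsP P' Q' y) :
    PFmap P' Q' (Sum.inr (y, false)) = {Sum.inr (y, false)} := by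
  rw [PFmap]
  exact if_pos h

open Classical in
lemma PFmap_F_nbs {y : Γ} (h : ¬ bsP P' Q' y) :
    PFmap P' Q' (Sum.inr (y, false)) = cellPF P' Q' y := by
  rw [PFmap]
  exact if_neg h

include hQP in
lemma isPartition_PFmap : IsPartition (PFmap P' Q') := by
  classical
  have key : ∀ y : Γ, ∀ x' ∈ cellPF P' Q' y, PFmap P' Q' x' = cellPF P' Q' y := by
    rintro y (z | ⟨z, t⟩) hx'
    · rw [mem_cellPF_inl] at hx'
      rw [PFmap_inl]
      exact cellPF_congr P' Q' (hQP.2 y z hx')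
    · rcases t with _ | _
      · rw [mem_cellPF_F] at hx'
        rw [PFmap_F_nbs hx'.2]
        exact cellPF_congr P' Q' (hQP.2 y z hx'.1)
      · rw [mem_cellPF_T] at hx'
        rw [PFmap_T]
        exact cellPF_congr P' Q' (hQP.2 y z hx')
  constructor
  · rintro (y | ⟨y, t⟩)
    · rw [PFmap_inl, mem_cellPF_inl]; exact hQP.1 y
    · rcases t with _ | _
      · by_cases h : bsP P' Q' y
        · rw [PFmap_F_bs h]; simp
        · rw [PFmap_F_nbs h, mem_cellPF_F]; exact ⟨hQP.1 y, h⟩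
      · rw [PFmap_T, mem_cellPF_T]; exact hQP.1 y
  · rintro (y | ⟨y, t⟩) x' hx'
    · exact key y x' hx'
    · rcases t with _ | _
      · by_cases h : bsP P' Q' y
        · rw [PFmap_F_bs h] at hx' ⊢
          simp at hx'
          rw [hx', PFmap_F_bs h]
        · rw [PFmap_F_nbs h] at hx' ⊢
          exact key y x' hx'
      · rw [PFmap_T] at hx' ⊢
        exact key y x' hx'

include hQP in
lemma RS_mem (w : Γ × Bool) : Sum.inr w ∈ RS P' Q' A' w := by
  classical
  rw [RS]
  split
  · simp
  · next h =>
    rw [Finset.mem_filter]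
    refine ⟨?_, Iff.rfl⟩
    rcases w with ⟨y, t⟩
    rcases t with _ | _
    · rw [mem_attF_F]
      exact ⟨hQP.1 y, fun hbs => h ⟨hbs, rfl⟩⟩
    · rw [mem_attF_T]
      exact hQP.1 y

lemma RS_spec (w : Γ × Bool) (u : Γ ⊕ (Γ × Bool)) (hu : u ∈ RS P' Q' A' w) :
    (∃ w', u = Sum.inr w') ∧ (u ∈ AS P' Q' A' ↔ Sum.inr w ∈ AS P' Q' A') := by
  classical
  rw [RS] at hu
  split at hu
  · simp at hu
    subst hu
    exact ⟨⟨w, rfl⟩, Iff.rfl⟩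
  · rw [Finset.mem_filter] at hu
    refine ⟨?_, hu.2⟩
    rcases u with z | w'
    · exact absurd hu.1 (mem_attF_inl P' Q')
    · exact ⟨w', rfl⟩

include hb0 hb1 hπ' in
lemma W_inl (z : Γ) :
    opin (πS P' Q' A' π' b0) (AS P' Q' A') (liftMap P') (Sum.inl z) =
      opin π' A' P' z := by
  exact opin_lift π' _ A' _ (fun y => mem_AS_inl P' Q' A') P' z

include hb0 hb1 hπ' in
lemma W_inr (w : Γ × Bool) :
    opin (πS P' Q' A' π' b0) (AS P' Q' A') (liftMap P') (Sum.inr w) =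
      (if Sum.inr w ∈ AS P' Q' A' then (1:ℝ) else 0) :=
  opin_singleton rfl (ne_of_gt (πS_pos hb0 hb1 hπ' _))

include hπ' hG3a hG3c in
lemma opinP_cases (z : Γ) :
    opin π' A' P' z = bv1 ∨
      (bsP P' Q' z ∧ opin π' A' P' z = (if z ∈ A' then 1 else 0)) := by
  classical
  by_cases hP : P' z = {z}
  · by_cases hQ : Q' z = {z}
    · exact Or.inr ⟨⟨hQ, hP⟩, opin_singleton hP (ne_of_gt (hπ' z))⟩
    · exact Or.inl (hG3c z hQ)
  · exact Or.inl ((hG3a z).resolve_right hP)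

include hb0 hb1 hπ' hQP in
lemma refine_PF_QF :
    refineBy (πS P' Q' A' π' b0) (AS P' Q' A') (PFmap P' Q') (liftMap P') = liftMap P' := by
  apply opin_const_refine
  rintro (y | w) u hu
  · rw [liftMap_inl] at hu
    rcases u with z | w'
    · rw [mem_liftSet_inl] at hu
      rw [opin_cellPF hb0 hb1 hπ' hQP.1 (PFmap_inl z),
        opin_cellPF hb0 hb1 hπ' hQP.1 (PFmap_inl y)]
    · exact absurd hu (mem_liftSet_inr)
  · rw [liftMap_inr, Finset.mem_singleton] at hu
    rw [hu]

end StepDyn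

end RD
namespace RD
open RationalDialogues

section StepDyn2

variable {Γ : Type} [Fintype Γ] [DecidableEq Γ]
variable {P' Q' : Γ → Finset Γ} {A' : Finset Γ} {π' : Γ → ℝ} {b0 bv1 : ℝ}
variable (hb0 : 0 < b0) (hb1 : b0 < 1) (hπ' : ∀ y, 0 < π' y)
variable (hQP : IsPartition Q') (hPP : IsPartition P')
variable (hv0 : bv1 ≠ 0) (hv1 : bv1 ≠ 1)
variable (hG3a : ∀ y, opin π' A' P' y = bv1 ∨ P' y = {y})
variable (hG3c : ∀ y, Q' y ≠ {y} → opin π' A' P' y = bv1)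

include hb0 hb1 hπ' hQP hv0 hv1 hG3a hG3c in
lemma refine_QF_PF :
    refineBy (πS P' Q' A' π' b0) (AS P' Q' A') (liftMap P') (PFmap P' Q') =
      liftMapR (RS P' Q' A') (refineBy π' A' P' Q') := by
  classical
  -- the member-exclusion fact: a retired/new state's 0/1 opinion never matches
  -- the opinion of a listed `P'`-relevant state.
  have hmain : ∀ (y z : Γ) (t : Bool), Sum.inr (z, t) ∈ cellPF P' Q' y →
      ¬ (bsP P' Q' y ∧ t = false) →
      ((if Sum.inr (z, t) ∈ AS P' Q' A' then (1:ℝ) else 0) = opin π' A' P' y → False) := by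
    intro y z t hmem hnj heq
    rcases opinP_cases hπ' hG3a hG3c y with hy | ⟨hbsy, hy⟩
    · rw [hy] at heq
      by_cases h : Sum.inr (z, t) ∈ AS P' Q' A'
      · rw [if_pos h] at heq; exact hv1 heq.symm
      · rw [if_neg h] at heq; exact hv0 heq.symm
    · -- y is retired; then z = y and t = true
      have hz : z ∈ Q' y := by
        rcases t with _ | _
        · rw [mem_cellPF_F] at hmem; exact hmem.1
        · rw [mem_cellPF_T] at hmem; exact hmem
      rw [hbsy.1, Finset.mem_singleton] at hz
      subst hz
      have ht : t = true := by
        rcases t with _ | _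
        · rw [mem_cellPF_F] at hmem
          exact absurd hbsy hmem.2
        · rfl
      subst ht
      rw [hy] at heq
      by_cases hzA : z ∈ A' <;> simp [mem_AS_T, hbsy, hzA] at heq
  funext x
  rcases x with y | ⟨z, t⟩
  · -- anchor a real state
    rw [refineBy]
    rw [PFmap_inl]
    show Finset.filter _ (cellPF P' Q' y) = liftSet (Finset.filter _ (Q' y))
    ext u
    rcases u with z | ⟨z, t⟩
    · rw [Finset.mem_filter, mem_liftSet_inl, Finset.mem_filter, mem_cellPF_inl]
      rw [W_inl hb0 hb1 hπ', W_inl hb0 hb1 hπ']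
    · simp only [Finset.mem_filter, mem_liftSet_inr, iff_false]
      rintro ⟨hmem, heq⟩
      rw [W_inr hb0 hb1 hπ', W_inl hb0 hb1 hπ'] at heq
      by_cases hbsy : bsP P' Q' y
      · -- then the anchor's q-cell is {y} and its p-cell is {y}; members: (y,true) only
        exact hmain y z t hmem (by
          rintro ⟨h1, h2⟩
          subst h2
          rw [mem_cellPF_F] at hmem
          -- z ∈ Q' y = {y} so z = y, but ¬ bs z contradicts bs y
          have hz : z = y := by
            have := hmem.1
            rw [hbsy.1, Finset.mem_singleton] at this
            exact this
          rw [hz] at hmem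
          exact hmem.2 hbsy) heq
      · exact hmain y z t hmem (fun h => hbsy h.1) heq
  · by_cases hjunk : bsP P' Q' z ∧ t = false
    · rw [refineBy]
      obtain ⟨hbs, rfl⟩ := hjunk
      rw [PFmap_F_bs hbs]
      show Finset.filter _ {Sum.inr (z, false)} = RS P' Q' A' (z, false)
      rw [RS, if_pos ⟨hbs, rfl⟩]
      apply Finset.filter_true_of_mem
      intro u hu
      rw [Finset.mem_singleton] at hu
      rw [hu]
    · rw [refineBy]
      have hcell : PFmap P' Q' (Sum.inr (z, t)) = cellPF P' Q' z := by
        rcases t with _ | _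
        · exact PFmap_F_nbs (fun h => hjunk ⟨h, rfl⟩)
        · rfl
      rw [hcell]
      show Finset.filter _ (cellPF P' Q' z) = RS P' Q' A' (z, t)
      rw [RS, if_neg hjunk]
      ext u
      rcases u with z' | ⟨z', s⟩
      · simp only [Finset.mem_filter, mem_cellPF_inl, mem_attF_inl, false_and, iff_false,
          not_and]
        intro hz' heq
        rw [W_inl hb0 hb1 hπ', W_inr hb0 hb1 hπ'] at heq
        -- `z'` is a surviving real state with a 0/1 opinion: impossible
        rcases opinP_cases hπ' hG3a hG3c z' with h | ⟨hbsz', h⟩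
        · rw [h] at heq
          by_cases hA : Sum.inr (z, t) ∈ AS P' Q' A'
          · rw [if_pos hA] at heq; exact hv1 heq
          · rw [if_neg hA] at heq; exact hv0 heq
        · -- z' retired, so Q' z = Q' z' = {z'}, hence z = z', bs z, t = true
          have hQzz : Q' z' = Q' z := hQP.2 z z' hz'
          have hzz : z = z' := by
            have : z ∈ Q' z' := by rw [hQzz]; exact hQP.1 z
            rw [hbsz'.1, Finset.mem_singleton] at this
            exact this
          subst hzz
          have ht : t = true := by
            rcases t with _ | _
            · exact absurd ⟨hbsz', rfl⟩ hjunk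
            · rfl
          subst ht
          rw [h] at heq
          by_cases hzA : z ∈ A' <;> simp [mem_AS_T, hbsz', hzA] at heq
      · rw [Finset.mem_filter, Finset.mem_filter]
        have hcm : Sum.inr (z', s) ∈ cellPF P' Q' z ↔ Sum.inr (z', s) ∈ attF P' Q' (Q' z) := by
          rcases s with _ | _
          · rw [mem_cellPF_F, mem_attF_F]
          · rw [mem_cellPF_T, mem_attF_T]
        rw [hcm]
        apply and_congr_right
        intro _
        rw [W_inr hb0 hb1 hπ', W_inr hb0 hb1 hπ']
        by_cases h1 : Sum.inr (z', s) ∈ AS P' Q' A' <;>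
          by_cases h2 : Sum.inr (z, t) ∈ AS P' Q' A' <;>
            simp [h1, h2]

end StepDyn2

end RD
namespace RD
open RationalDialogues

lemma step (T : ℕ) (b : ℕ → ℝ) (hT : 2 ≤ T)
    (h00 : 0 < b 0) (h01 : b 0 < 1) (h10 : b 1 ≠ 0) (h11 : b 1 ≠ 1)
    (hprev : Realizes (T-1) (fun t => b (t+1))) : Realizes T b := by
  classical
  obtain ⟨Γ, iF, iD, π', A', P', Q', ω₀', hpos', hPP, hQP, hdia', hG3a', hG3c', hG3d'⟩ := hprev
  have hG3a : ∀ y, opin π' A' P' y = b 1 ∨ P' y = {y} := hG3a'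
  have hG3c : ∀ y, Q' y ≠ {y} → opin π' A' P' y = b 1 := hG3c'
  set b0 := b 0 with hb0def
  set πs := πS P' Q' A' π' b0 with hπs
  set As := AS P' Q' A' with hAs
  set PF := PFmap P' Q' with hPF
  set QF := liftMap P' with hQF
  set Q1 := refineBy π' A' P' Q' with hQ1
  have hA : ∀ y : Γ, Sum.inl y ∈ As ↔ y ∈ A' := fun y => mem_AS_inl P' Q' A'
  have hpos : ∀ u, 0 < πs u := πS_pos h00 h01 hpos'
  have hπseq : πs = Sum.elim π'
      (fun w => if w.2 then eTF P' Q' A' π' b0 w.1 else eFF P' Q' A' π' b0 w.1) := rfl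
  -- time 1
  have h1 : partsAt πs As PF QF true 1 = (PF, QF) := by
    rw [partsAt_succ_p pSpeaks0]
    show (PF, refineBy πs As PF QF) = (PF, QF)
    rw [hπs, hAs, hPF, hQF, refine_PF_QF h00 h01 hpos' hQP]
  -- time 2
  have h2 : partsAt πs As PF QF true 2 = (liftMapR (RS P' Q' A') Q1, QF) := by
    rw [partsAt_succ_q notpSpeaks1, h1]
    show (refineBy πs As QF PF, QF) = _
    rw [hπs, hAs, hPF, hQF, hQ1,
      refine_QF_PF h00 h01 hpos' hQP h10 h11 hG3a hG3c]
  -- time 1 on the smaller framework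
  have hp1 : partsAt π' A' P' Q' true 1 = (P', Q1) := by
    rw [partsAt_succ_p pSpeaks0]
    rfl
  -- the general correspondence
  have hcor : ∀ k, partsAt πs As PF QF true (k+2) =
      (liftMapR (RS P' Q' A') ((partsAt π' A' P' Q' true (k+1)).2),
        liftMap ((partsAt π' A' P' Q' true (k+1)).1)) := by
    intro k
    rw [partsAt_shift2, h2]
    have hlift := partsAt_liftR π'
      (fun w => if w.2 then eTF P' Q' A' π' b0 w.1 else eFF P' Q' A' π' b0 w.1)
      A' As (RS P' Q' A') (by rw [← hπseq]; exact hpos) hA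
      (RS_spec (P' := P') (Q' := Q') (A' := A')) Q1 P' k
    have hswap := partsAt_swap π' A' Q1 P' k
    have hshift := partsAt_shift1 π' A' P' Q' true k
    rw [hp1] at hshift
    have h3 : partsAt π' A' P' Q' true (k+1) =
        ((partsAt π' A' Q1 P' true k).2, (partsAt π' A' Q1 P' true k).1) := by
      rw [hshift]
      show partsAt π' A' P' Q1 false k = _
      exact hswap
    show partsAt πs As (liftMapR (RS P' Q' A') Q1) (liftMap P') true k = _
    rw [hπseq, hlift, h3]
  -- positivity, partitions
  refine ⟨Γ ⊕ (Γ × Bool), inferInstance, inferInstance, πs, As, PF, QF, Sum.inl ω₀',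
    hpos, ?_, ?_, ?_, ?_, ?_, ?_⟩
  · rw [hPF]; exact isPartition_PFmap hQP
  · rw [hQF]; exact isPartition_liftMap hPP
  · -- the dialogue values
    intro n
    match n with
    | 0 =>
        rw [dialogue, if_pos pSpeaks0]
        show opin πs As PF (Sum.inl ω₀') = b (min 0 (T-1))
        rw [hπs, hAs, hPF, opin_cellPF h00 h01 hpos' hQP.1 (PFmap_inl ω₀')]
        simp [hb0def]
    | 1 =>
        rw [dialogue, if_neg notpSpeaks1, h1]
        show opin πs As QF (Sum.inl ω₀') = b (min 1 (T-1))
        rw [hπs, hAs, hQF, W_inl h00 h01 hpos']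
        have hd0 := hdia' 0
        rw [dialogue, if_pos pSpeaks0] at hd0
        have : opin π' A' P' ω₀' = b 1 := by
          have h' : opin π' A' ((partsAt π' A' P' Q' true 0).1) ω₀' = b 1 := by
            rw [hd0]
            simp
          exact h'
        rw [this]
        congr 1
        omega
    | (k+2) =>
        rw [dialogue, hcor k]
        have hdn := hdia' (k+1)
        have hmin : min (k+1) (T-1-1) + 1 = min (k+2) (T-1) := by omega
        by_cases h : pSpeaksAt true (k+2)
        · rw [if_pos h]
          have hodd : ¬ pSpeaksAt true (k+1) := by
            rw [pSpeaksAt_true] at h ⊢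
            rcases h with ⟨m, hm⟩
            rintro ⟨m', hm'⟩
            omega
          rw [dialogue, if_neg hodd] at hdn
          show opin πs As (liftMapR (RS P' Q' A') ((partsAt π' A' P' Q' true (k+1)).2))
            (Sum.inl ω₀') = b (min (k+2) (T-1))
          rw [hπs] at hπseq ⊢
          rw [hπseq, hAs]
          rw [opin_liftR π' _ A' _ (RS P' Q' A') (by rw [← hAs]; exact hA)]
          rw [hdn]
          exact congrArg b hmin
        · rw [if_neg h]
          have hodd : pSpeaksAt true (k+1) := by
            rw [pSpeaksAt_true] at h ⊢
            rcases Nat.even_or_odd (k+1) with he | ho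
            · exact he
            · exfalso
              apply h
              rcases ho with ⟨m, hm⟩
              exact ⟨m+1, by omega⟩
          rw [dialogue, if_pos hodd] at hdn
          show opin πs As (liftMap ((partsAt π' A' P' Q' true (k+1)).1))
            (Sum.inl ω₀') = b (min (k+2) (T-1))
          show opin πs As (liftMap ((partsAt π' A' P' Q' true (k+1)).1))
            (Sum.inl ω₀') = b (min (k+2) (T-1))
          rw [hπseq, hAs]
          rw [opin_lift π' _ A' _ (by rw [← hAs]; exact hA)
            ((partsAt π' A' P' Q' true (k+1)).1) ω₀']
          rw [hdn]
          exact congrArg b hmin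
  · -- G3a
    rintro (y | ⟨y, t⟩)
    · left
      rw [hπs, hAs, hPF, opin_cellPF h00 h01 hpos' hQP.1 (PFmap_inl y)]
    · rcases t with _ | _
      · by_cases hbs : bsP P' Q' y
        · right; rw [hPF]; exact PFmap_F_bs hbs
        · left
          rw [hπs, hAs, hPF, opin_cellPF h00 h01 hpos' hQP.1 (PFmap_F_nbs hbs)]
      · left
        rw [hπs, hAs, hPF, opin_cellPF h00 h01 hpos' hQP.1 (PFmap_T y)]
  · -- G3c
    rintro (y | w) h
    · rw [hπs, hAs, hPF, opin_cellPF h00 h01 hpos' hQP.1 (PFmap_inl y)]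
    · exact absurd rfl h
  · -- G3d
    rintro (y | w) h
    · rw [hPF]
      intro hEq
      have hmem : Sum.inr (y, true) ∈ PFmap P' Q' (Sum.inl y) := by
        rw [PFmap_inl, mem_cellPF_T]
        exact hQP.1 y
      rw [hEq] at hmem
      simp at hmem
    · exact absurd rfl h
end RD

namespace RD
open RationalDialogues

theorem realizes_all : ∀ T : ℕ, 1 ≤ T → ∀ b : ℕ → ℝ,
    (∀ t, t < T → 0 ≤ b t ∧ b t ≤ 1) →
    (∀ t, t + 1 < T → (b t = 0 ∨ b t = 1) → b (t + 1) = b t) →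
    Realizes T b := by
  intro T
  induction T using Nat.strong_induction_on with
  | _ T IH =>
    intro hT b hrange hca
    by_cases hb0 : b 0 = 0 ∨ b 0 = 1
    · exact base_const hT hca hb0
    · push_neg at hb0
      have h00 : 0 < b 0 := lt_of_le_of_ne (hrange 0 (by omega)).1 (Ne.symm hb0.1)
      have h01 : b 0 < 1 := lt_of_le_of_ne (hrange 0 (by omega)).2 hb0.2
      rcases Nat.lt_or_ge T 2 with h2 | h2
      · exact base_one (by omega) h00 h01
      · by_cases hb1 : b 1 = 0 ∨ b 1 = 1
        · exact base_two h2 h00 h01 hca hb1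
        · push_neg at hb1
          refine step T b h2 h00 h01 hb1.1 hb1.2 ?_
          exact IH (T-1) (by omega) (by omega) (fun t => b (t+1))
            (fun t ht => hrange (t+1) (by omega))
            (fun t ht h01' => hca (t+1) (by omega) h01')

end RD

/-- Any finite dialogue `(b₁, …, b_T)` with values in `[0,1]`
that does not violate certainty acquiescence is a rational dialogue: it is the
initial segment of a Bayesian dialogue at a fixed state (with first speaker `p`),
and moreover consensus is reached at time `T` at `b_T`.
Here `b t` (0-indexed, `t < T`) is the opinion `b_{t+1}`. -/
theorem rational_dialogue_of_certainty_acquiescence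
    (T : ℕ) (hT : 1 ≤ T) (b : ℕ → ℝ)
    (hrange : ∀ t, t < T → 0 ≤ b t ∧ b t ≤ 1)
    (hca : ∀ t, t + 1 < T → (b t = 0 ∨ b t = 1) → b (t + 1) = b t) :
    ∃ (Ω : Type) (_ : Fintype Ω) (_ : DecidableEq Ω) (π : Ω → ℝ) (A : Finset Ω)
      (P Q : Ω → Finset Ω) (ω₀ : Ω),
      IsBOF π P Q ∧
      (∀ t, t < T → dialogue π A P Q true ω₀ t = b t) ∧
      (∀ t, T - 1 ≤ t → dialogue π A P Q true ω₀ t = b (T - 1)) := by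
  obtain ⟨Ω, iF, iD, π, A, P, Q, ω₀, hpos, hPP, hQP, hdia, -, -, -⟩ :=
    RD.realizes_all T hT b hrange hca
  have hsum : 0 < ∑ ω, π ω :=
    Finset.sum_pos (fun i _ => hpos i) ⟨ω₀, Finset.mem_univ ω₀⟩
  set c := (∑ ω, π ω)⁻¹ with hc
  have hcpos : 0 < c := inv_pos.mpr hsum
  refine ⟨Ω, iF, iD, (fun w => c * π w), A, P, Q, ω₀,
    ⟨fun w => mul_pos hcpos (hpos w), ?_, hPP, hQP⟩, ?_, ?_⟩
  · rw [← Finset.mul_sum, hc, inv_mul_cancel₀ (ne_of_gt hsum)]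
  · intro t ht
    rw [RD.dialogue_smul (ne_of_gt hcpos), hdia]
    congr 1
    omega
  · intro t ht
    rw [RD.dialogue_smul (ne_of_gt hcpos), hdia]
    congr 1
    omega
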